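/- Let Q be a noncentral chi-square random variable with N degrees of freedom and noncentrality parameter λ = NΓ, for Γ > 0. Then for every η with 0 < η ≤ 1 + Γ, P[Q ≤ ηN] ≤ exp(−(N/2)·(η + Γ + log[(√(4ηΓ+1) + 1)/(2η)] − √(4ηΓ+1))). -/

import Mathlib

open MeasureTheory ProbabilityTheory Real
open scoped NNReal ENNReal

lemma gauss_sq_mgf (s c : ℝ) (hs : s ≤ 0) :
    ∫ x, Real.exp (s * (x + c)^2) ∂(gaussianReal 0 1)
      = Real.exp (s * c^2 / (1 - 2*s) - Real.log (1 - 2*s) / 2) := by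
  have ha : (0:ℝ) < 1/2 - s := by linarith
  set a : ℝ := 1/2 - s with ha_def
  have h2a : 1 - 2*s = 2*a := by ring
  have hpos : (0:ℝ) < 1 - 2*s := by linarith
  rw [gaussianReal_of_var_ne_zero 0 one_ne_zero]
  have hpdf : (gaussianPDF 0 1) = fun x => ((Real.toNNReal (gaussianPDFReal 0 1 x) : ℝ≥0) : ℝ≥0∞) := by
    funext x; rfl
  rw [hpdf, integral_withDensity_eq_integral_smul
    ((measurable_gaussianPDFReal 0 1).real_toNNReal) _]
  have hkey : ∀ x : ℝ, (Real.toNNReal (gaussianPDFReal 0 1 x) : ℝ≥0) • Real.exp (s * (x + c)^2)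
      = ((Real.sqrt (2*π))⁻¹ * Real.exp (s * c^2 / (2*a))) * Real.exp (-a * (x - s*c/a)^2) := by
    intro x
    rw [NNReal.smul_def, smul_eq_mul, Real.coe_toNNReal _ (gaussianPDFReal_nonneg 0 1 x)]
    rw [gaussianPDFReal]
    push_cast
    rw [mul_one, sub_zero, mul_one]
    rw [mul_assoc, ← Real.exp_add, mul_assoc, ← Real.exp_add]
    congr 1
    have ha' : a ≠ 0 := ha.ne'
    congr 1
    clear_value a
    have hs' : s = 1/2 - a := by linarith
    subst hs'
    field_simp
    ring
  rw [integral_congr_ae (ae_of_all _ hkey), integral_const_mul]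
  have htrans : ∫ x : ℝ, Real.exp (-a * (x - s*c/a)^2)
      = ∫ x : ℝ, Real.exp (-a * x^2) := by
    simp_rw [sub_eq_add_neg]
    exact integral_add_right_eq_self (fun x => Real.exp (-a * x^2)) (-(s*c/a))
  rw [htrans, integral_gaussian]
  have hcoef : (Real.sqrt (2*π))⁻¹ * Real.sqrt (π / a) = (Real.sqrt (1-2*s))⁻¹ := by
    rw [Real.sqrt_div pi_pos.le, Real.sqrt_mul (by norm_num : (0:ℝ) ≤ 2), h2a,
      Real.sqrt_mul (by norm_num : (0:ℝ) ≤ 2)]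
    have h2 : Real.sqrt 2 ≠ 0 := by positivity
    have hπ : Real.sqrt π ≠ 0 := by positivity
    have haa : Real.sqrt a ≠ 0 := by positivity
    field_simp
  have hlog : (Real.sqrt (1-2*s))⁻¹ = Real.exp (-(Real.log (1-2*s)/2)) := by
    rw [← Real.log_sqrt hpos.le, Real.exp_neg, Real.exp_log (Real.sqrt_pos.mpr hpos)]
  rw [mul_right_comm, hcoef, hlog, ← Real.exp_add, h2a]
  ring_nf

lemma exp_ident (η Γ t L R Nr : ℝ) (ht : t ≠ 0) (hkey : t * η + Γ / t = R) :
    -((1 - t) / 2) * (η * Nr) + (((1 - t) / 2) * (Nr * Γ) / t - Nr * (L / 2))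
      = -(Nr / 2) * (η + Γ + L - R) := by
  have h2 : t * (t * η) + Γ = t * R := by
    have := congrArg (fun x => t * x) hkey
    field_simp at this
    linarith [this]
  field_simp
  linear_combination Nr * h2

theorem noncentral_chi_square_lower_tail
    {Ω : Type*} [MeasurableSpace Ω] (P : Measure Ω) [IsProbabilityMeasure P]
    (N : ℕ) (hN : 0 < N) (Γ : ℝ) (hΓ : 0 < Γ)
    (X : Fin N → Ω → ℝ)
    (hmeas : ∀ i, Measurable (X i))
    (hindep : iIndepFun X P)
    (hgauss : ∀ i, Measure.map (X i) P = gaussianReal 0 1)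
    (m : Fin N → ℝ) (hm : ∑ i, (m i) ^ 2 = N * Γ)
    (Q : Ω → ℝ) (hQ : ∀ ω, Q ω = ∑ i, (X i ω + m i) ^ 2)
    (η : ℝ) (hη0 : 0 < η) (hη1 : η ≤ 1 + Γ) :
    P {ω | Q ω ≤ η * N} ≤ ENNReal.ofReal (Real.exp (-(N / 2) *
      (η + Γ + Real.log ((Real.sqrt (4 * η * Γ + 1) + 1) / (2 * η))
        - Real.sqrt (4 * η * Γ + 1)))) := by
  set R : ℝ := Real.sqrt (4 * η * Γ + 1) with hR_def
  have hR0 : 0 ≤ R := Real.sqrt_nonneg _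
  have hR2 : R ^ 2 = 4 * η * Γ + 1 := Real.sq_sqrt (by positivity)
  set t : ℝ := (R + 1) / (2 * η) with ht_def
  have ht0 : 0 < t := by positivity
  have htge : 1 ≤ t := by
    rw [ht_def, le_div_iff₀ (by positivity)]
    nlinarith [hR2, hR0, hη0, hη1]
  set s : ℝ := (1 - t) / 2 with hs_def
  have hts : 1 - 2 * s = t := by rw [hs_def]; ring
  have hs : s ≤ 0 := by rw [hs_def]; linarith
  -- the summands
  set Y : Fin N → Ω → ℝ := fun i ω => (X i ω + m i) ^ 2 with hY_def
  have hYmeas : ∀ i, Measurable (Y i) := fun i => ((hmeas i).add_const (m i)).pow_const 2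
  have hYindep : iIndepFun Y P :=
    hindep.comp (fun i x => (x + m i) ^ 2) (fun i => (measurable_id.add_const _).pow_const 2)
  have hQsum : Q = ∑ i, Y i := by
    funext ω; rw [hQ]; simp [hY_def]
  have hQmeas : Measurable Q := by
    rw [hQsum, show (∑ i, Y i) = fun ω => ∑ i, Y i ω from funext fun ω => Finset.sum_apply ω _ _]
    exact Finset.measurable_sum _ (fun i _ => hYmeas i)
  -- mgf of each summand
  have hmgf_i : ∀ i, mgf (Y i) P s
      = Real.exp (s * (m i) ^ 2 / (1 - 2 * s) - Real.log (1 - 2 * s) / 2) := by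
    intro i
    have hmap : ∫ ω, Real.exp (s * (X i ω + m i) ^ 2) ∂P
        = ∫ x, Real.exp (s * (x + m i) ^ 2) ∂(Measure.map (X i) P) := by
      rw [integral_map (hmeas i).aemeasurable]
      exact (((measurable_id.add_const (m i)).pow_const 2).const_mul s).exp.aestronglyMeasurable
    show ∫ ω, Real.exp (s * Y i ω) ∂P = _
    rw [hY_def]
    simpa using hmap.trans (by rw [hgauss i, gauss_sq_mgf s (m i) hs])
  -- mgf of Q
  have hmgfQ : mgf Q P s
      = Real.exp (s * (N * Γ) / (1 - 2 * s) - N * (Real.log (1 - 2 * s) / 2)) := by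
    rw [hQsum, hYindep.mgf_sum hYmeas Finset.univ]
    have : ∀ i ∈ Finset.univ, mgf (Y i) P s
        = Real.exp (s * (m i) ^ 2 / (1 - 2 * s) - Real.log (1 - 2 * s) / 2) :=
      fun i _ => hmgf_i i
    rw [Finset.prod_congr rfl this, ← Real.exp_sum]
    congr 1
    rw [Finset.sum_sub_distrib, ← Finset.sum_div, ← Finset.mul_sum, hm,
      Finset.sum_const, Finset.card_univ, Fintype.card_fin, nsmul_eq_mul]
  -- integrability
  have hQnn : ∀ ω, 0 ≤ Q ω := fun ω => by rw [hQ]; positivity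
  have hint : Integrable (fun ω => Real.exp (s * Q ω)) P := by
    refine Integrable.mono' (integrable_const (1 : ℝ))
      ((hQmeas.const_mul s).exp.aestronglyMeasurable) (ae_of_all _ fun ω => ?_)
    rw [Real.norm_eq_abs, abs_of_pos (Real.exp_pos _)]
    exact Real.exp_le_one_iff.mpr (mul_nonpos_of_nonpos_of_nonneg hs (hQnn ω))
  -- Chernoff
  have hch := measure_le_le_exp_mul_mgf (μ := P) (X := Q) (η * N) hs hint
  -- algebraic identity at the optimal s
  have ht2 : η * t ^ 2 = t + Γ := by
    rw [ht_def]
    field_simp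
    nlinarith [hR2]
  have hkey : t * η + Γ / t = R := by
    rw [ht_def]
    have h2η : (2*η) ≠ 0 := by positivity
    have hRp : R + 1 ≠ 0 := by positivity
    field_simp
    nlinarith [hR2]
  have hident : Real.exp (-s * (η * N)) * mgf Q P s
      = Real.exp (-(N / 2) * (η + Γ + Real.log t - R)) := by
    rw [hmgfQ, ← Real.exp_add]
    congr 1
    rw [hts, hs_def]
    exact exp_ident η Γ t (Real.log t) R N (ne_of_gt ht0) hkey
  calc P {ω | Q ω ≤ η * N}
      = ENNReal.ofReal (P {ω | Q ω ≤ η * N}).toReal :=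
        (ENNReal.ofReal_toReal (measure_ne_top P _)).symm
    _ ≤ ENNReal.ofReal (Real.exp (-(N / 2) * (η + Γ + Real.log t - R))) := by
        apply ENNReal.ofReal_le_ofReal
        rw [← hident]
        exact hch
    _ = _ := by rw [ht_def, hR_def]
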